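/- With A₀ = ((1/2, 0; 0, 2), √2) and A₁ = ((1/2, 1; 0, 2), √2) in Mp₂(R), and R = ((1 0;1 1), √(τ+1)), one has A₀ R A₀⁻¹ = R⁴ and A₁ R A₁⁻¹ = T R⁻⁴ Z, where T = ((1 1;0 1),1) and Z = (−I, i). -/

import Mathlib

open scoped MatrixGroups UpperHalfPlane

open Complex in
private lemma mp2_sqrt_quadrant {z : ℂ} (hz : 0 < z.im) :
    0 < (z ^ (1/2 : ℂ)).re ∧ 0 < (z ^ (1/2 : ℂ)).im := by
  have hz0 : z ≠ 0 := fun h => by simp [h] at hz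
  have harg0 : 0 < z.arg := by
    rw [Complex.arg_of_im_pos hz, Real.arccos_pos]
    have habs : |z.re| < ‖z‖ := (Complex.abs_re_lt_norm (z := z)).2 hz.ne'
    rw [div_lt_one (lt_of_le_of_lt (abs_nonneg _) habs)]
    exact lt_of_abs_lt habs
  have hargpi : z.arg < Real.pi := by
    rw [Complex.arg_lt_pi_iff]; right; exact hz.ne'
  rw [Complex.cpow_def_of_ne_zero hz0, Complex.exp_re, Complex.exp_im]
  have him : (Complex.log z * (1/2)).im = z.arg / 2 := by
    simp [Complex.log_im, mul_comm]; ring_nf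
  rw [him]
  have hepos : 0 < Real.exp ((Complex.log z * (1/2)).re) := Real.exp_pos _
  refine ⟨mul_pos hepos ?_, mul_pos hepos ?_⟩
  · exact Real.cos_pos_of_mem_Ioo ⟨by linarith [Real.pi_pos], by linarith⟩
  · exact Real.sin_pos_of_pos_of_lt_pi (by linarith) (by linarith [Real.pi_pos])

private lemma mp2_halfpow_sq {z : ℂ} (hz : z ≠ 0) :
    z ^ (1/2 : ℂ) * z ^ (1/2 : ℂ) = z := by
  rw [← Complex.cpow_add _ _ hz]; norm_num

private lemma mp2_halfpow_mul {a b : ℂ} (ha : 0 < a.im) (hb : 0 < b.im)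
    (hab : 0 < (a*b).im) :
    a ^ (1/2 : ℂ) * b ^ (1/2 : ℂ) = (a*b) ^ (1/2 : ℂ) := by
  have ha0 : a ≠ 0 := fun h => by simp [h] at ha
  have hb0 : b ≠ 0 := fun h => by simp [h] at hb
  obtain ⟨har, hai⟩ := mp2_sqrt_quadrant ha
  obtain ⟨hbr, hbi⟩ := mp2_sqrt_quadrant hb
  obtain ⟨-, habi⟩ := mp2_sqrt_quadrant hab
  have hsq : (a ^ (1/2:ℂ) * b ^ (1/2:ℂ))^2 = ((a*b) ^ (1/2:ℂ))^2 := by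
    rw [sq, sq, mp2_halfpow_sq (mul_ne_zero ha0 hb0),
      show a^(1/2:ℂ) * b^(1/2:ℂ) * (a^(1/2:ℂ) * b^(1/2:ℂ))
        = (a^(1/2:ℂ) * a^(1/2:ℂ)) * (b^(1/2:ℂ) * b^(1/2:ℂ)) by ring,
      mp2_halfpow_sq ha0, mp2_halfpow_sq hb0]
  rcases sq_eq_sq_iff_eq_or_eq_neg (R := ℂ) |>.mp hsq with h | h
  · exact h
  · exfalso
    have hpos : (a ^ (1/2:ℂ) * b ^ (1/2:ℂ)).im > 0 := by
      simp [Complex.mul_im]; nlinarith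
    rw [h] at hpos
    simp at hpos
    linarith

private lemma mp2_halfpow_mul_neg_one {a b : ℂ} (ha : 0 < a.im) (hb : 0 < b.im)
    (hab : a*b = -1) :
    a ^ (1/2 : ℂ) * b ^ (1/2 : ℂ) = Complex.I := by
  have ha0 : a ≠ 0 := fun h => by simp [h] at ha
  have hb0 : b ≠ 0 := fun h => by simp [h] at hb
  obtain ⟨har, hai⟩ := mp2_sqrt_quadrant ha
  obtain ⟨hbr, hbi⟩ := mp2_sqrt_quadrant hb
  have hsq : (a ^ (1/2:ℂ) * b ^ (1/2:ℂ))^2 = Complex.I ^ 2 := by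
    rw [Complex.I_sq, ← hab, sq,
      show a^(1/2:ℂ) * b^(1/2:ℂ) * (a^(1/2:ℂ) * b^(1/2:ℂ))
        = (a^(1/2:ℂ) * a^(1/2:ℂ)) * (b^(1/2:ℂ) * b^(1/2:ℂ)) by ring,
      mp2_halfpow_sq ha0, mp2_halfpow_sq hb0]
  rcases sq_eq_sq_iff_eq_or_eq_neg (R := ℂ) |>.mp hsq with h | h
  · exact h
  · exfalso
    have hpos : (a ^ (1/2:ℂ) * b ^ (1/2:ℂ)).im > 0 := by
      simp [Complex.mul_im]; nlinarith
    rw [h] at hpos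
    simp at hpos
    linarith

private lemma mp2_ne_zero_of_im_pos {z : ℂ} (h : 0 < z.im) : z ≠ 0 :=
  fun hz => by simp [hz] at h

private lemma mp2_div_im_pos {p q : ℂ} (hq : q ≠ 0)
    (h : 0 < p.im * q.re - p.re * q.im) : 0 < (p/q).im := by
  rw [Complex.div_im, div_sub_div_same]
  exact div_pos h (Complex.normSq_pos.mpr hq)


/-- Elements of the real metaplectic group: a matrix in `SL₂(ℝ)` together with a function
`ℍ → ℂ`. -/
abbrev MpRPair : Type := SL(2, ℝ) × (ℍ → ℂ)

/-- Multiplication `(α,φ)(β,ψ) = (αβ, φ(βτ)ψ(τ))` of metaplectic pairs over `ℝ`. -/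
noncomputable def mpRMul (p q : MpRPair) : MpRPair :=
  (p.1 * q.1, fun τ => p.2 (q.1 • τ) * q.2 τ)

set_option maxHeartbeats 1000000 in
/-- With `A₀ = ((1/2,0;0,2), √2)`, `A₁ = ((1/2,1;0,2), √2)` and `R = ((1 0;1 1), √(τ+1))`
in `Mp₂(ℝ)`, one has `A₀ R A₀⁻¹ = R⁴` and `A₁ R A₁⁻¹ = T R⁻⁴ Z`, with `T = ((1 1;0 1),1)`
and `Z = (−I, i)`; the two identities are stated in the equivalent product forms
`A₀ R = R⁴ A₀` and `R⁴ T⁻¹ A₁ R = Z A₁`. -/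
theorem mp2R_conjugation :
    let A₀ : MpRPair := (⟨!![1 / 2, 0; 0, 2], by norm_num [Matrix.det_fin_two_of]⟩,
      fun _ => (Real.sqrt 2 : ℂ))
    let A₁ : MpRPair := (⟨!![1 / 2, 1; 0, 2], by norm_num [Matrix.det_fin_two_of]⟩,
      fun _ => (Real.sqrt 2 : ℂ))
    let R : MpRPair := (⟨!![1, 0; 1, 1], by norm_num [Matrix.det_fin_two_of]⟩,
      fun τ => ((τ : ℂ) + 1) ^ (1 / 2 : ℂ))
    let Tinv : MpRPair := (⟨!![1, -1; 0, 1], by norm_num [Matrix.det_fin_two_of]⟩, fun _ => 1)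
    let Z : MpRPair := (⟨!![-1, 0; 0, -1], by norm_num [Matrix.det_fin_two_of]⟩,
      fun _ => Complex.I)
    let R4 : MpRPair := mpRMul R (mpRMul R (mpRMul R R))
    -- `A₀ R A₀⁻¹ = R⁴`:
    mpRMul A₀ R = mpRMul R4 A₀ ∧
    -- `A₁ R A₁⁻¹ = T R⁻⁴ Z`:
    mpRMul (mpRMul R4 (mpRMul Tinv A₁)) R = mpRMul Z A₁ := by
  intro A₀ A₁ R Tinv Z R4
  have hpt : ∀ σ : ℍ, 0 < (σ : ℂ).im := fun σ => σ.2
  have hR : ∀ σ : ℍ, (((R.1 • σ : ℍ)) : ℂ) = (σ:ℂ)/((σ:ℂ)+1) := by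
    intro σ; rw [UpperHalfPlane.specialLinearGroup_apply]; simp [R]
  have hA₀ : ∀ σ : ℍ, (((A₀.1 • σ : ℍ)) : ℂ) = (σ:ℂ)/4 := by
    intro σ; rw [UpperHalfPlane.specialLinearGroup_apply]; simp [A₀]; ring
  have hA₁ : ∀ σ : ℍ, (((A₁.1 • σ : ℍ)) : ℂ) = (σ:ℂ)/4 + 1/2 := by
    intro σ; rw [UpperHalfPlane.specialLinearGroup_apply]; simp [A₁]; ring
  have hTinv : ∀ σ : ℍ, (((Tinv.1 • σ : ℍ)) : ℂ) = (σ:ℂ) - 1 := by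
    intro σ; rw [UpperHalfPlane.specialLinearGroup_apply]; simp [Tinv]; ring
  constructor
  · refine Prod.ext ?_ ?_
    · ext i j
      simp only [mpRMul, R4, Matrix.SpecialLinearGroup.coe_mul]
      fin_cases i <;> fin_cases j <;>
        simp [mpRMul, A₀, R, R4, Matrix.mul_apply, Fin.sum_univ_two] <;> norm_num
    · funext τ
      have ht : 0 < (τ:ℂ).im := hpt τ
      have htim : 0 < τ.im := τ.im_pos
      simp only [mpRMul, R4]
      simp only [mul_smul]
      simp only [A₀, R]
      set p0 : ℍ := A₀.1 • τ with hp0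
      set p1 : ℍ := R.1 • p0 with hp1
      set p2 : ℍ := R.1 • p1 with hp2
      set p3 : ℍ := R.1 • p2 with hp3
      have d1 : ((τ:ℂ)+4) ≠ 0 := mp2_ne_zero_of_im_pos (by simpa using ht)
      have d2 : (2*(τ:ℂ)+4) ≠ 0 := mp2_ne_zero_of_im_pos (by simp; linarith [τ.im_pos])
      have d3 : (3*(τ:ℂ)+4) ≠ 0 := mp2_ne_zero_of_im_pos (by simp; linarith [τ.im_pos])
      have E0 : (p0 : ℂ) = (τ:ℂ)/4 := by rw [hp0, hA₀]
      have E1 : (p1 : ℂ) = (τ:ℂ)/((τ:ℂ)+4) := by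
        rw [hp1, hR, E0]; field_simp [d1]; try ring
      have E2 : (p2 : ℂ) = (τ:ℂ)/(2*(τ:ℂ)+4) := by
        rw [hp2, hR, E1]; field_simp [d1, d2]
        try ring
        try linear_combination (↑τ:ℂ) * mul_inv_cancel₀ d2
      have E3 : (p3 : ℂ) = (τ:ℂ)/(3*(τ:ℂ)+4) := by
        rw [hp3, hR, E2, div_add_one d2, div_div_div_cancel_right₀ d2]; ring
        try ring
        try linear_combination (↑τ:ℂ) * mul_inv_cancel₀ d3
      have e1 : ((p1:ℂ)+1)*((p0:ℂ)+1) = ((τ:ℂ)+2)/2 := by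
        rw [E0, E1]; field_simp [d1]; try ring
      have e2 : ((p2:ℂ)+1)*(((τ:ℂ)+2)/2) = (3*(τ:ℂ)+4)/4 := by
        rw [E2, div_add_one d2, div_mul_div_comm, div_eq_div_iff (mul_ne_zero d2 two_ne_zero) (by norm_num : (4:ℂ) ≠ 0)]; ring
      have e3 : ((p3:ℂ)+1)*((3*(τ:ℂ)+4)/4) = (τ:ℂ)+1 := by
        rw [E3, div_add_one d3, div_mul_div_comm, div_eq_iff (mul_ne_zero d3 (by norm_num : (4:ℂ) ≠ 0))]; ring
      have i1 : 0 < (((τ:ℂ)+2)/2).im :=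
        mp2_div_im_pos (by norm_num) (by simp; linarith [τ.im_pos])
      have i2 : 0 < ((3*(τ:ℂ)+4)/4).im :=
        mp2_div_im_pos (by norm_num) (by simp; linarith [τ.im_pos])
      have s1 : ((p1:ℂ)+1)^(1/2:ℂ) * ((p0:ℂ)+1)^(1/2:ℂ) = (((τ:ℂ)+2)/2)^(1/2:ℂ) := by
        rw [mp2_halfpow_mul (by simpa using hpt p1) (by simpa using hpt p0)
          (by rw [e1]; exact i1), e1]
      have s2 : ((p2:ℂ)+1)^(1/2:ℂ) * (((τ:ℂ)+2)/2)^(1/2:ℂ) = ((3*(τ:ℂ)+4)/4)^(1/2:ℂ) := by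
        rw [mp2_halfpow_mul (by simpa using hpt p2) i1 (by rw [e2]; exact i2), e2]
      have s3 : ((p3:ℂ)+1)^(1/2:ℂ) * ((3*(τ:ℂ)+4)/4)^(1/2:ℂ) = ((τ:ℂ)+1)^(1/2:ℂ) := by
        rw [mp2_halfpow_mul (by simpa using hpt p3) i2
          (by rw [e3]; simpa using ht), e3]
      rw [s1, s2, s3]; ring
  · refine Prod.ext ?_ ?_
    · refine Subtype.ext ?_
      simp only [mpRMul, R4, Matrix.SpecialLinearGroup.coe_mul]
      simp only [A₁, R, Tinv, Z]
      norm_num [Matrix.mul_fin_two]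
    · funext τ
      have ht : 0 < (τ:ℂ).im := hpt τ
      have htim : 0 < τ.im := τ.im_pos
      simp only [mpRMul, R4]
      simp only [mul_smul]
      simp only [A₁, R, Tinv, Z]
      set q0 : ℍ := Tinv.1 • A₁.1 • R.1 • τ with hq0
      set q1 : ℍ := R.1 • q0 with hq1
      set q2 : ℍ := R.1 • q1 with hq2
      set q3 : ℍ := R.1 • q2 with hq3
      have dt1 : ((τ:ℂ)+1) ≠ 0 := mp2_ne_zero_of_im_pos (by simpa using ht)
      have d44 : (4*(τ:ℂ)+4) ≠ 0 := mp2_ne_zero_of_im_pos (by simp; linarith [τ.im_pos])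
      have d32 : (3*(τ:ℂ)+2) ≠ 0 := mp2_ne_zero_of_im_pos (by simp; linarith [τ.im_pos])
      have d2t : (2*(τ:ℂ)) ≠ 0 := mp2_ne_zero_of_im_pos (by simp; linarith [τ.im_pos])
      have dm2 : ((τ:ℂ)-2) ≠ 0 := mp2_ne_zero_of_im_pos (by simpa using ht)
      have d22 : (2*(τ:ℂ)+2) ≠ 0 := mp2_ne_zero_of_im_pos (by simp; linarith [τ.im_pos])
      have E0 : (q0 : ℂ) = (-(τ:ℂ)-2)/(4*(τ:ℂ)+4) := by
        rw [hq0, hTinv, hA₁, hR]; field_simp [dt1, d44]; try ring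
      have E1 : (q1 : ℂ) = (-(τ:ℂ)-2)/(3*(τ:ℂ)+2) := by
        rw [hq1, hR, E0]; field_simp [d44, d32]
        try ring
        try linear_combination (-((τ:ℂ)+2)) * mul_inv_cancel₀ d32
      have E2 : (q2 : ℂ) = (-(τ:ℂ)-2)/(2*(τ:ℂ)) := by
        have ht0 : (τ:ℂ) ≠ 0 := mp2_ne_zero_of_im_pos (by simpa using τ.im_pos)
        rw [hq2, hR, E1, div_add_one d32, div_div_div_cancel_right₀ d32]; ring
        try ring
        try linear_combination (-((τ:ℂ)+2)) * mul_inv_cancel₀ ht0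
      have E3 : (q3 : ℂ) = (-(τ:ℂ)-2)/((τ:ℂ)-2) := by
        rw [hq3, hR, E2, div_add_one d2t, div_div_div_cancel_right₀ d2t]; ring
        try ring
        try linear_combination (-((τ:ℂ)+2)) * mul_inv_cancel₀ dm2
      have e1 : ((q1:ℂ)+1)*((q0:ℂ)+1) = (τ:ℂ)/(2*(τ:ℂ)+2) := by
        rw [E0, E1, div_add_one d32, div_add_one d44, div_mul_div_comm, div_eq_div_iff (mul_ne_zero d32 d44) d22]; ring
      have e2 : ((q2:ℂ)+1)*((τ:ℂ)/(2*(τ:ℂ)+2)) = ((τ:ℂ)-2)/(4*(τ:ℂ)+4) := by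
        rw [E2, div_add_one d2t, div_mul_div_comm, div_eq_div_iff (mul_ne_zero d2t d22) d44]; ring
      have e3 : ((q3:ℂ)+1)*(((τ:ℂ)-2)/(4*(τ:ℂ)+4)) = -1/((τ:ℂ)+1) := by
        rw [E3, div_add_one dm2, div_mul_div_comm, div_eq_div_iff (mul_ne_zero dm2 d44) dt1]; ring
      have i1 : 0 < ((τ:ℂ)/(2*(τ:ℂ)+2)).im :=
        mp2_div_im_pos d22 (by simp only [Complex.add_re, Complex.add_im, Complex.mul_re, Complex.mul_im, Complex.sub_re, Complex.sub_im, Complex.neg_re, Complex.neg_im, Complex.one_re, Complex.one_im, Complex.re_ofNat, Complex.im_ofNat, UpperHalfPlane.coe_im, UpperHalfPlane.coe_re]; nlinarith [τ.im_pos])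
      have i2 : 0 < (((τ:ℂ)-2)/(4*(τ:ℂ)+4)).im :=
        mp2_div_im_pos d44 (by simp only [Complex.add_re, Complex.add_im, Complex.mul_re, Complex.mul_im, Complex.sub_re, Complex.sub_im, Complex.neg_re, Complex.neg_im, Complex.one_re, Complex.one_im, Complex.re_ofNat, Complex.im_ofNat, UpperHalfPlane.coe_im, UpperHalfPlane.coe_re]; nlinarith [τ.im_pos])
      have i3 : 0 < ((-1:ℂ)/((τ:ℂ)+1)).im :=
        mp2_div_im_pos dt1 (by simp only [Complex.add_re, Complex.add_im, Complex.mul_re, Complex.mul_im, Complex.sub_re, Complex.sub_im, Complex.neg_re, Complex.neg_im, Complex.one_re, Complex.one_im, Complex.re_ofNat, Complex.im_ofNat, UpperHalfPlane.coe_im, UpperHalfPlane.coe_re]; nlinarith [τ.im_pos])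
      have s1 : ((q1:ℂ)+1)^(1/2:ℂ) * ((q0:ℂ)+1)^(1/2:ℂ) = ((τ:ℂ)/(2*(τ:ℂ)+2))^(1/2:ℂ) := by
        rw [mp2_halfpow_mul (by simpa using hpt q1) (by simpa using hpt q0)
          (by rw [e1]; exact i1), e1]
      have s2 : ((q2:ℂ)+1)^(1/2:ℂ) * ((τ:ℂ)/(2*(τ:ℂ)+2))^(1/2:ℂ)
          = (((τ:ℂ)-2)/(4*(τ:ℂ)+4))^(1/2:ℂ) := by
        rw [mp2_halfpow_mul (by simpa using hpt q2) i1 (by rw [e2]; exact i2), e2]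
      have s3 : ((q3:ℂ)+1)^(1/2:ℂ) * (((τ:ℂ)-2)/(4*(τ:ℂ)+4))^(1/2:ℂ)
          = ((-1:ℂ)/((τ:ℂ)+1))^(1/2:ℂ) := by
        rw [mp2_halfpow_mul (by simpa using hpt q3) i2 (by rw [e3]; exact i3), e3]
      have s4 : ((-1:ℂ)/((τ:ℂ)+1))^(1/2:ℂ) * ((τ:ℂ)+1)^(1/2:ℂ) = Complex.I := by
        apply mp2_halfpow_mul_neg_one i3 (by simpa using ht)
        field_simp
      rw [s1, s2, s3]
      linear_combination (Real.sqrt 2 : ℂ) * s4
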